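/- arXiv:2504.16259 — 2 statements merged into one kernel-verified Lean document; each statement's English description precedes it below -/
import Mathlib

section
/- Let p and q be probability mass functions on a finite set, arising as p_i = Tr(M_i ρ) and q_i = Tr(M_i σ) for a POVM (M_i) (positive semidefinite matrices summing to the identity) and density matrices ρ, σ ∈ Mat_n(ℂ). Then the classical Kullback–Leibler divergence satisfies D(q‖p) ≤ D(σ‖ρ), where D(σ‖ρ) = Tr(σ(log σ − log ρ)) is the quantum (Umegaki) relative entropy, assuming ρ and σ are positive definite. -/
open scoped ComplexOrder Matrix

/-- Matrix logarithm of a Hermitian matrix via the spectral theorem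
(junk value `0` on non-Hermitian matrices). -/
noncomputable def matLog {I : Type*} [Fintype I] [DecidableEq I]
    (A : Matrix I I ℂ) : Matrix I I ℂ :=
  if hA : A.IsHermitian then
    (hA.eigenvectorUnitary : Matrix I I ℂ) *
      Matrix.diagonal (fun i => (Real.log (hA.eigenvalues i) : ℂ)) *
      star (hA.eigenvectorUnitary : Matrix I I ℂ)
  else 0

/-- The Umegaki quantum relative entropy `D(σ‖ρ) = Tr(σ(log σ − log ρ))`. -/
noncomputable def qRelEnt {I : Type*} [Fintype I] [DecidableEq I]
    (σ ρ : Matrix I I ℂ) : ℝ :=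
  ((σ * (matLog σ - matLog ρ)).trace).re

open MeasureTheory Set Filter Topology

/-- completing the square, per matrix entry -/
lemma cs_entry (α β : ℝ) (hα : 0 < α) (K g : ℂ) :
    2*β*((starRingEnd ℂ) K * g).re - α * Complex.normSq K ≤ β^2 * Complex.normSq g / α := by
  rw [le_div_iff₀ hα]
  have h1 := sq_nonneg (α * K.re - β * g.re)
  have h2 := sq_nonneg (α * K.im - β * g.im)
  simp only [Complex.mul_re, Complex.normSq_apply, RingHomCompTriple.comp_apply,
    Complex.conj_re, Complex.conj_im]
  nlinarith [h1, h2, hα]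

/-- derivative of the antiderivative -/
lemma key_deriv (s r : ℝ) (hs : 0 < s) (hr : 0 < r) {t : ℝ} (ht : 0 ≤ t) :
    HasDerivAt (fun t : ℝ => s*Real.log (1+t) - s*Real.log (s+t*r) + (s-r)/(1+t))
      ((s-r)^2 * t / ((1+t)^2*(s+t*r))) t := by
  have h1 : (0:ℝ) < 1 + t := by linarith
  have h2 : (0:ℝ) < s + t*r := by nlinarith
  have d1 : HasDerivAt (fun t : ℝ => 1+t) 1 t := by
    simpa using (hasDerivAt_id t).const_add 1
  have d2 : HasDerivAt (fun t : ℝ => s+t*r) r t := by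
    simpa using ((hasDerivAt_id t).mul_const r).const_add s
  have dl1 : HasDerivAt (fun t : ℝ => Real.log (1+t)) (1/(1+t)) t := d1.log h1.ne'
  have dl2 : HasDerivAt (fun t : ℝ => Real.log (s+t*r)) (r/(s+t*r)) t := d2.log h2.ne'
  have d3 : HasDerivAt (fun t : ℝ => (s-r)/(1+t)) (-(s-r)/(1+t)^2) t := by
    have := (d1.inv h1.ne').const_mul (s-r)
    have h : -(s-r)/(1+t)^2 = (s-r) * (-1/(1+t)^2) := by ring
    rw [h]
    simpa [div_eq_mul_inv, neg_div] using this
  have := ((dl1.const_mul s).sub (dl2.const_mul s)).add d3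
  refine this.congr_deriv ?_
  field_simp
  ring

lemma key_tendsto (s r : ℝ) (hs : 0 < s) (hr : 0 < r) :
    Tendsto (fun t : ℝ => s*Real.log (1+t) - s*Real.log (s+t*r) + (s-r)/(1+t))
      atTop (𝓝 (-(s * Real.log r))) := by
  have h0 : Tendsto (fun t : ℝ => (s-r)/(1+t)) atTop (𝓝 0) := by
    apply Tendsto.div_atTop tendsto_const_nhds
    exact tendsto_atTop_add_const_left _ 1 tendsto_id
  have h1 : Tendsto (fun t : ℝ => (s+t*r)/(1+t)) atTop (𝓝 r) := by
    have : Tendsto (fun t : ℝ => r + (s-r)/(1+t)) atTop (𝓝 (r+0)) :=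
      tendsto_const_nhds.add h0
    rw [add_zero] at this
    apply this.congr'
    filter_upwards [eventually_gt_atTop 0] with t ht
    have : (1:ℝ)+t ≠ 0 := by linarith
    field_simp
    ring
  have h2 : Tendsto (fun t : ℝ => -(s * Real.log ((s+t*r)/(1+t)))) atTop
      (𝓝 (-(s * Real.log r))) :=
    (((Real.continuousAt_log hr.ne').tendsto.comp h1).const_mul s).neg
  have h3 := h2.add h0
  rw [add_zero] at h3
  apply h3.congr'
  filter_upwards [eventually_gt_atTop 0] with t ht
  have ha : (0:ℝ) < 1 + t := by linarith
  have hb : (0:ℝ) < s + t*r := by nlinarith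
  rw [Real.log_div hb.ne' ha.ne']
  ring

lemma key_integrable (s r : ℝ) (hs : 0 < s) (hr : 0 < r) :
    IntegrableOn (fun t : ℝ => (s-r)^2 * t / ((1+t)^2*(s+t*r))) (Ioi 0) := by
  refine integrableOn_Ioi_deriv_of_nonneg
    ((key_deriv s r hs hr le_rfl).continuousAt.continuousWithinAt)
    (fun x hx => key_deriv s r hs hr (le_of_lt hx))
    (fun x hx => ?_) (key_tendsto s r hs hr)
  have hx0 := mem_Ioi.mp hx
  have h1 : (0:ℝ) < 1 + x := by linarith
  have h2 : (0:ℝ) < s + x*r := by nlinarith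
  positivity

lemma key_integral (s r : ℝ) (hs : 0 < s) (hr : 0 < r) :
    ∫ t in Ioi (0:ℝ), (s-r)^2 * t / ((1+t)^2*(s+t*r))
      = s*Real.log s - s*Real.log r - s + r := by
  have := integral_Ioi_of_hasDerivAt_of_tendsto
    ((key_deriv s r hs hr le_rfl).continuousAt.continuousWithinAt)
    (fun x hx => key_deriv s r hs hr (le_of_lt (mem_Ioi.mp hx)))
    (key_integrable s r hs hr) (key_tendsto s r hs hr)
  rw [this]
  simp [Real.log_one]
  ring

lemma classical_rep (Q P : ℝ) (hQ : 0 < Q) (hP : 0 < P) :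
    Q * Real.log (Q/P)
      = (∫ t in Ioi (0:ℝ), (Q-P)^2 * t / ((1+t)^2*(Q+t*P))) + (Q - P) := by
  rw [key_integral Q P hQ hP, Real.log_div hQ.ne' hP.ne']
  ring

/-- trace of B*τ*B with B Hermitian against PosDef τ : nonneg, and zero iff B = 0 -/
lemma trace_BtB {n : ℕ} (τ B : Matrix (Fin n) (Fin n) ℂ) (hB : B.IsHermitian) (hτ : τ.PosDef) :
    0 ≤ ((B*τ*B).trace).re ∧ (((B*τ*B).trace).re = 0 → B = 0) := by
  have hent : ∀ a, (B*τ*B) a a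
      = dotProduct (star (fun x => B x a)) (τ *ᵥ (fun x => B x a)) := by
    intro a
    simp only [Matrix.mul_apply, dotProduct, Matrix.mulVec, Pi.star_apply,
      dotProduct]
    have hBx : ∀ x, B a x = (starRingEnd ℂ) (B x a) := by
      intro x
      conv_lhs => rw [← hB]
      simp [Matrix.conjTranspose_apply]
    simp only [Finset.sum_mul, Finset.mul_sum]
    rw [Finset.sum_comm]
    apply Finset.sum_congr rfl
    intro x _
    apply Finset.sum_congr rfl
    intro y _
    rw [hBx x]; simp only [Complex.star_def]; ring
  have hterm : ∀ a, 0 ≤ ((B*τ*B) a a).re ∧ (((B*τ*B) a a).re = 0 → (fun x => B x a) = 0) := by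
    intro a
    by_cases hv : (fun x => B x a) = 0
    · constructor
      · rw [hent a, hv]; simp
      · intro _; exact hv
    · have := hτ.dotProduct_mulVec_pos hv
      rw [Complex.lt_def] at this
      constructor
      · rw [hent a]; exact le_of_lt this.1
      · intro h; rw [hent a] at h
        have h1 := this.1
        rw [Complex.zero_re, h] at h1
        exact absurd h1 (lt_irrefl 0)
  have htr : ((B*τ*B).trace).re = ∑ a, ((B*τ*B) a a).re := by
    rw [Matrix.trace]; exact Complex.re_sum _ _
  constructor
  · rw [htr]; exact Finset.sum_nonneg fun a _ => (hterm a).1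
  · intro h
    rw [htr] at h
    have hz := (Finset.sum_eq_zero_iff_of_nonneg (fun a _ => (hterm a).1)).mp h
    ext x a
    have := (hterm a).2 (hz a (Finset.mem_univ a))
    exact congrFun this x

lemma diag_mid {n : ℕ} (X Y : Matrix (Fin n) (Fin n) ℂ) (e : Fin n → ℂ) (a : Fin n) :
    (X * (Matrix.diagonal e * Y)) a a = ∑ b, X a b * e b * Y b a := by
  rw [← Matrix.mul_assoc]
  rw [Matrix.mul_apply]
  apply Finset.sum_congr rfl
  intro b _
  rw [Matrix.mul_diagonal]

/-- master sandwich trace formula (pure cyclicity, no unitarity needed) -/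
lemma trace_sandwich {n : ℕ} (U V C1 C2 : Matrix (Fin n) (Fin n) ℂ) (d e : Fin n → ℂ) :
    ((U * Matrix.diagonal d * star U) * C1 * (V * Matrix.diagonal e * star V) * C2).trace
      = ∑ a, ∑ b, d a * e b * ((star U * C1 * V) a b) * ((star V * C2 * U) b a) := by
  have h1 : (U * Matrix.diagonal d * star U) * C1 * (V * Matrix.diagonal e * star V) * C2
      = U * (Matrix.diagonal d * ((star U * C1 * V) * (Matrix.diagonal e * (star V * C2)))) := by
    simp only [Matrix.mul_assoc]
  rw [h1, Matrix.trace_mul_comm, Matrix.trace]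
  have h2 : ∀ a, ((Matrix.diagonal d * (star U * C1 * V * (Matrix.diagonal e * (star V * C2)))) * U) a a
      = d a * ((star U * C1 * V) * (Matrix.diagonal e * (star V * C2 * U))) a a := by
    intro a
    rw [Matrix.mul_assoc, Matrix.diagonal_mul]
    congr 1
    simp only [Matrix.mul_assoc]
  calc ∑ a, ((Matrix.diagonal d * (star U * C1 * V * (Matrix.diagonal e * (star V * C2)))) * U).diag a
      = ∑ a, d a * ((star U * C1 * V) * (Matrix.diagonal e * (star V * C2 * U))) a a := by
        apply Finset.sum_congr rfl; intro a _; exact h2 a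
    _ = ∑ a, ∑ b, d a * e b * ((star U * C1 * V) a b) * ((star V * C2 * U) b a) := by
        apply Finset.sum_congr rfl; intro a _
        rw [diag_mid, Finset.mul_sum]
        apply Finset.sum_congr rfl; intro b _; ring

set_option maxHeartbeats 1000000 in
lemma core_ineq {n : ℕ} {I : Type*} [Fintype I]
    (σ ρ : Matrix (Fin n) (Fin n) ℂ) (hσ : σ.PosDef) (hρ : ρ.PosDef)
    (M : I → Matrix (Fin n) (Fin n) ℂ) (hM : ∀ i, (M i).PosSemidef) (hMsum : ∑ i, M i = 1)
    (t : ℝ) (ht : 0 < t) (c : I → ℝ) :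
    ∑ i, (2 * c i * (((M i * σ).trace).re - ((M i * ρ).trace).re)
          - (c i)^2 * (((M i * σ).trace).re + t * ((M i * ρ).trace).re))
    ≤ ∑ a, ∑ b, Complex.normSq
          ((star (hσ.1.eigenvectorUnitary : Matrix (Fin n) (Fin n) ℂ)
            * (hρ.1.eigenvectorUnitary : Matrix (Fin n) (Fin n) ℂ)) a b)
        * ((hσ.1.eigenvalues a - hρ.1.eigenvalues b)^2
            / (hσ.1.eigenvalues a + t * hρ.1.eigenvalues b)) := by
  classical
  set q : I → ℝ := fun i => ((M i * σ).trace).re with hq_def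
  set p : I → ℝ := fun i => ((M i * ρ).trace).re with hp_def
  set s : Fin n → ℝ := hσ.1.eigenvalues with hs_def
  set r : Fin n → ℝ := hρ.1.eigenvalues with hr_def
  set U : Matrix (Fin n) (Fin n) ℂ := (hσ.1.eigenvectorUnitary : Matrix (Fin n) (Fin n) ℂ)
    with hU_def
  set V : Matrix (Fin n) (Fin n) ℂ := (hρ.1.eigenvectorUnitary : Matrix (Fin n) (Fin n) ℂ)
    with hV_def
  set g : Matrix (Fin n) (Fin n) ℂ := star U * V with hg_def
  set C : Matrix (Fin n) (Fin n) ℂ := ∑ i, (c i : ℂ) • M i with hC_def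
  set K : Matrix (Fin n) (Fin n) ℂ := star U * C * V with hK_def
  have hs_pos : ∀ a, 0 < s a := fun a => hσ.eigenvalues_pos a
  have hr_pos : ∀ b, 0 < r b := fun b => hρ.eigenvalues_pos b
  have hVu : V * star V = 1 := Matrix.mem_unitaryGroup_iff.mp hρ.1.eigenvectorUnitary.2
  have hUu : U * star U = 1 := Matrix.mem_unitaryGroup_iff.mp hσ.1.eigenvectorUnitary.2
  have hσspec : σ = U * Matrix.diagonal (fun a => (s a : ℂ)) * star U :=
    hσ.1.spectral_theorem
  have hρspec : ρ = V * Matrix.diagonal (fun b => (r b : ℂ)) * star V :=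
    hρ.1.spectral_theorem
  have hMH : ∀ i, (M i).IsHermitian := fun i => (hM i).1
  have hCH : C.IsHermitian := by
    unfold Matrix.IsHermitian
    rw [hC_def, Matrix.conjTranspose_sum]
    apply Finset.sum_congr rfl
    intro i _
    rw [Matrix.conjTranspose_smul, hMH i]
    congr 1
    simp [Complex.star_def, Complex.conj_ofReal]
  have hKherm : star V * C * U = Kᴴ := by
    rw [hK_def]
    simp only [Matrix.conjTranspose_mul, Matrix.star_eq_conjTranspose,
      Matrix.conjTranspose_conjTranspose]
    rw [hCH]
    simp only [Matrix.mul_assoc]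
  have hgherm : star V * U = gᴴ := by
    rw [hg_def]
    simp only [Matrix.conjTranspose_mul, Matrix.star_eq_conjTranspose,
      Matrix.conjTranspose_conjTranspose]
  -- linear trace identities
  have hTrCσ : ((C * σ).trace) = ∑ i, (c i : ℂ) * (M i * σ).trace := by
    rw [hC_def, Matrix.sum_mul, Matrix.trace_sum]
    apply Finset.sum_congr rfl
    intro i _
    rw [Matrix.smul_mul, Matrix.trace_smul, smul_eq_mul]
  have hTrCρ : ((C * ρ).trace) = ∑ i, (c i : ℂ) * (M i * ρ).trace := by
    rw [hC_def, Matrix.sum_mul, Matrix.trace_sum]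
    apply Finset.sum_congr rfl
    intro i _
    rw [Matrix.smul_mul, Matrix.trace_smul, smul_eq_mul]
  have hTrCσ_re : ((C * σ).trace).re = ∑ i, c i * q i := by
    rw [hTrCσ, Complex.re_sum]
    apply Finset.sum_congr rfl
    intro i _
    exact Complex.re_ofReal_mul _ _
  have hTrCρ_re : ((C * ρ).trace).re = ∑ i, c i * p i := by
    rw [hTrCρ, Complex.re_sum]
    apply Finset.sum_congr rfl
    intro i _
    exact Complex.re_ofReal_mul _ _
  -- sandwich identities
  have hTrσC : ((σ * C).trace) = ∑ a, ∑ b, (s a : ℂ) * (K a b * (starRingEnd ℂ) (g a b)) := by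
    have h := trace_sandwich U V C 1 (fun a => (s a : ℂ)) (fun _ => (1:ℂ))
    have hL : (U * Matrix.diagonal (fun a => (s a : ℂ)) * star U) * C
        * (V * Matrix.diagonal (fun _ => (1:ℂ)) * star V) * 1 = σ * C := by
      simp only [Matrix.diagonal_one, Matrix.mul_one]
      rw [hVu, Matrix.mul_one, ← hσspec]
    rw [hL] at h
    rw [h]
    apply Finset.sum_congr rfl; intro a _
    apply Finset.sum_congr rfl; intro b _
    rw [Matrix.mul_one, hgherm, Matrix.conjTranspose_apply]
    simp only [Complex.star_def]
    ring
  have hTrρC : ((ρ * C).trace) = ∑ b, ∑ a, (r b : ℂ) * ((starRingEnd ℂ) (K a b) * g a b) := by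
    have h := trace_sandwich V U C 1 (fun b => (r b : ℂ)) (fun _ => (1:ℂ))
    have hL : (V * Matrix.diagonal (fun b => (r b : ℂ)) * star V) * C
        * (U * Matrix.diagonal (fun _ => (1:ℂ)) * star U) * 1 = ρ * C := by
      simp only [Matrix.diagonal_one, Matrix.mul_one]
      rw [hUu, Matrix.mul_one, ← hρspec]
    rw [hL] at h
    rw [h]
    apply Finset.sum_congr rfl; intro b _
    apply Finset.sum_congr rfl; intro a _
    rw [Matrix.mul_one, hKherm, Matrix.conjTranspose_apply]
    simp only [Complex.star_def]
    ring
  have hTrσCC : ((σ * C * C).trace) = ∑ a, ∑ b, (s a : ℂ) * Complex.normSq (K a b) := by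
    have h := trace_sandwich U V C C (fun a => (s a : ℂ)) (fun _ => (1:ℂ))
    have hL : (U * Matrix.diagonal (fun a => (s a : ℂ)) * star U) * C
        * (V * Matrix.diagonal (fun _ => (1:ℂ)) * star V) * C = σ * C * C := by
      simp only [Matrix.diagonal_one, Matrix.mul_one]
      rw [hVu, Matrix.mul_one, ← hσspec]
    rw [hL] at h
    rw [h]
    apply Finset.sum_congr rfl; intro a _
    apply Finset.sum_congr rfl; intro b _
    rw [hKherm, Matrix.conjTranspose_apply]
    simp only [Complex.star_def, mul_one]
    rw [mul_assoc, Complex.mul_conj]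
  have hTrρCC : ((ρ * C * C).trace) = ∑ b, ∑ a, (r b : ℂ) * Complex.normSq (K a b) := by
    have h := trace_sandwich V U C C (fun b => (r b : ℂ)) (fun _ => (1:ℂ))
    have hL : (V * Matrix.diagonal (fun b => (r b : ℂ)) * star V) * C
        * (U * Matrix.diagonal (fun _ => (1:ℂ)) * star U) * C = ρ * C * C := by
      simp only [Matrix.diagonal_one, Matrix.mul_one]
      rw [hUu, Matrix.mul_one, ← hρspec]
    rw [hL] at h
    rw [h]
    apply Finset.sum_congr rfl; intro b _
    apply Finset.sum_congr rfl; intro a _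
    rw [hKherm, Matrix.conjTranspose_apply]
    simp only [Complex.star_def, mul_one]
    rw [mul_assoc, mul_comm ((starRingEnd ℂ) (K a b)), Complex.mul_conj]
  -- Jensen via PSD
  have hXH : ∀ i : I, ((c i : ℂ) • (1 : Matrix (Fin n) (Fin n) ℂ) - C)ᴴ
      = (c i : ℂ) • (1 : Matrix (Fin n) (Fin n) ℂ) - C := by
    intro i
    rw [Matrix.conjTranspose_sub, Matrix.conjTranspose_smul, Matrix.conjTranspose_one, hCH]
    congr 1
    simp [Complex.star_def, Complex.conj_ofReal]
  have hXexp : ∀ i : I, ((c i : ℂ) • (1 : Matrix (Fin n) (Fin n) ℂ) - C) * M i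
      * ((c i : ℂ) • (1 : Matrix (Fin n) (Fin n) ℂ) - C)
      = ((c i : ℂ)^2) • M i - (c i : ℂ) • (M i * C) - (c i : ℂ) • (C * M i) + C * M i * C := by
    intro i
    simp only [Matrix.sub_mul, Matrix.mul_sub, Matrix.smul_mul, Matrix.mul_smul,
      Matrix.one_mul, Matrix.mul_one, smul_smul, ← pow_two]
    module
  have hPsum : ∑ i, ((c i : ℂ) • (1 : Matrix (Fin n) (Fin n) ℂ) - C) * M i
      * ((c i : ℂ) • (1 : Matrix (Fin n) (Fin n) ℂ) - C)
      = (∑ i, ((c i : ℂ)^2) • M i) - C * C := by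
    rw [Finset.sum_congr rfl (fun i _ => hXexp i)]
    rw [Finset.sum_add_distrib, Finset.sum_sub_distrib, Finset.sum_sub_distrib]
    have e1 : ∑ i, (c i : ℂ) • (M i * C) = C * C := by
      have : ∀ i : I, (c i : ℂ) • (M i * C) = ((c i : ℂ) • M i) * C := by
        intro i; rw [Matrix.smul_mul]
      rw [Finset.sum_congr rfl (fun i _ => this i), ← Matrix.sum_mul, ← hC_def]
    have e2 : ∑ i, (c i : ℂ) • (C * M i) = C * C := by
      have : ∀ i : I, (c i : ℂ) • (C * M i) = C * ((c i : ℂ) • M i) := by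
        intro i; rw [Matrix.mul_smul]
      rw [Finset.sum_congr rfl (fun i _ => this i), ← Matrix.mul_sum, ← hC_def]
    have e3 : ∑ i, C * M i * C = C * C := by
      have : ∀ i : I, C * M i * C = C * (M i * C) := by
        intro i; rw [Matrix.mul_assoc]
      rw [Finset.sum_congr rfl (fun i _ => this i), ← Matrix.mul_sum, ← Matrix.sum_mul,
        hMsum, Matrix.one_mul]
    rw [e1, e2, e3]
    abel
  have hPSDP : ((∑ i, ((c i : ℂ)^2) • M i) - C * C).PosSemidef := by
    rw [← hPsum]
    apply Finset.sum_induction _ _ (fun A B hA hB => hA.add hB) Matrix.PosSemidef.zero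
    intro i _
    have h := (hM i).mul_mul_conjTranspose_same ((c i : ℂ) • (1 : Matrix (Fin n) (Fin n) ℂ) - C)
    rwa [hXH i] at h
  have hTrP : ∀ τ : Matrix (Fin n) (Fin n) ℂ, τ.PosDef →
      0 ≤ ((τ * ((∑ i, ((c i : ℂ)^2) • M i) - C * C)).trace).re := by
    intro τ hτ
    set B : Matrix (Fin n) (Fin n) ℂ := (open scoped MatrixOrder Matrix.Norms.L2Operator in CFC.sqrt ((∑ i, ((c i : ℂ)^2) • M i) - C * C)) with hB_def
    have hBB : B * B = (∑ i, ((c i : ℂ)^2) • M i) - C * C := by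
      open scoped MatrixOrder Matrix.Norms.L2Operator in exact CFC.sqrt_mul_sqrt_self _ (Matrix.nonneg_iff_posSemidef.mpr hPSDP)
    have hBH : B.IsHermitian := by
      open scoped MatrixOrder Matrix.Norms.L2Operator in exact (Matrix.nonneg_iff_posSemidef.mp (CFC.sqrt_nonneg _)).1
    have htr : (τ * ((∑ i, ((c i : ℂ)^2) • M i) - C * C)).trace = ((B * τ * B)).trace := by
      rw [← hBB, ← Matrix.mul_assoc, Matrix.trace_mul_comm, ← Matrix.mul_assoc]
    rw [htr]
    exact (trace_BtB τ B hBH hτ).1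
  have hlin : ∀ τ : Matrix (Fin n) (Fin n) ℂ,
      ((τ * ((∑ i, ((c i : ℂ)^2) • M i) - C * C)).trace).re
        = (∑ i, (c i)^2 * ((M i * τ).trace).re) - ((τ * C * C).trace).re := by
    intro τ
    rw [Matrix.mul_sub, Matrix.trace_sub, Matrix.mul_sum, Matrix.trace_sum]
    have : ∀ i : I, (τ * ((c i : ℂ)^2 • M i)).trace = ((c i : ℂ))^2 * (M i * τ).trace := by
      intro i
      rw [Matrix.mul_smul, Matrix.trace_smul, smul_eq_mul, Matrix.trace_mul_comm]
    rw [Finset.sum_congr rfl (fun i _ => this i)]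
    rw [Complex.sub_re, Complex.re_sum, ← Matrix.mul_assoc]
    congr 1
    apply Finset.sum_congr rfl
    intro i _
    have : ((c i : ℂ))^2 = ((((c i)^2 : ℝ)) : ℂ) := by push_cast; ring
    rw [this, Complex.re_ofReal_mul]
  have hJσ : ((σ * C * C).trace).re ≤ ∑ i, (c i)^2 * q i := by
    have h0 := hTrP σ hσ
    rw [hlin σ] at h0
    linarith
  have hJρ : ((ρ * C * C).trace).re ≤ ∑ i, (c i)^2 * p i := by
    have h0 := hTrP ρ hρ
    rw [hlin ρ] at h0
    linarith
  -- real-part double-sum expressions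
  have hrecc : ∀ z w : ℂ, (z * (starRingEnd ℂ) w).re = ((starRingEnd ℂ) z * w).re := by
    intro z w
    simp only [Complex.mul_re, Complex.conj_re, Complex.conj_im]
    ring
  have hA : (∑ i, c i * q i) = ∑ a, ∑ b, s a * ((starRingEnd ℂ) (K a b) * g a b).re := by
    rw [← hTrCσ_re, Matrix.trace_mul_comm, hTrσC, Complex.re_sum]
    apply Finset.sum_congr rfl; intro a _
    rw [Complex.re_sum]
    apply Finset.sum_congr rfl; intro b _
    rw [Complex.re_ofReal_mul, hrecc]
  have hB2 : (∑ i, c i * p i) = ∑ a, ∑ b, r b * ((starRingEnd ℂ) (K a b) * g a b).re := by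
    rw [← hTrCρ_re, Matrix.trace_mul_comm, hTrρC, Complex.re_sum]
    rw [Finset.sum_comm]
    apply Finset.sum_congr rfl; intro a _
    rw [Complex.re_sum]
    apply Finset.sum_congr rfl; intro b _
    rw [Complex.re_ofReal_mul]
  have hC2 : ((σ * C * C).trace).re = ∑ a, ∑ b, s a * Complex.normSq (K a b) := by
    rw [hTrσCC, Complex.re_sum]
    apply Finset.sum_congr rfl; intro a _
    rw [Complex.re_sum]
    apply Finset.sum_congr rfl; intro b _
    rw [← Complex.ofReal_mul]
    exact Complex.ofReal_re _
  have hD2 : ((ρ * C * C).trace).re = ∑ a, ∑ b, r b * Complex.normSq (K a b) := by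
    rw [hTrρCC, Complex.re_sum, Finset.sum_comm]
    apply Finset.sum_congr rfl; intro a _
    rw [Complex.re_sum]
    apply Finset.sum_congr rfl; intro b _
    rw [← Complex.ofReal_mul]
    exact Complex.ofReal_re _
  have hα : ∀ a b, 0 < s a + t * r b := by
    intro a b
    have := hs_pos a; have := hr_pos b
    nlinarith
  -- the chain
  calc ∑ i, (2 * c i * (q i - p i) - (c i)^2 * (q i + t * p i))
      = 2*(∑ i, c i * q i) - 2*(∑ i, c i * p i)
          - ((∑ i, (c i)^2 * q i) + t*(∑ i, (c i)^2 * p i)) := by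
        rw [Finset.mul_sum, Finset.mul_sum, Finset.mul_sum, ← Finset.sum_sub_distrib,
          ← Finset.sum_add_distrib, ← Finset.sum_sub_distrib]
        apply Finset.sum_congr rfl; intro i _; ring
    _ ≤ 2*(∑ i, c i * q i) - 2*(∑ i, c i * p i)
          - (((σ * C * C).trace).re + t*(((ρ * C * C).trace).re)) := by
        have h2 : t*(((ρ * C * C).trace).re) ≤ t*(∑ i, (c i)^2 * p i) :=
          mul_le_mul_of_nonneg_left hJρ ht.le
        linarith
    _ = ∑ a, ∑ b, (2*(s a - r b)*((starRingEnd ℂ) (K a b) * g a b).re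
          - (s a + t*r b)*Complex.normSq (K a b)) := by
        rw [hA, hB2, hC2, hD2]
        rw [Finset.mul_sum, Finset.mul_sum, Finset.mul_sum, ← Finset.sum_sub_distrib,
          ← Finset.sum_add_distrib, ← Finset.sum_sub_distrib]
        apply Finset.sum_congr rfl; intro a _
        rw [Finset.mul_sum, Finset.mul_sum, Finset.mul_sum, ← Finset.sum_sub_distrib,
          ← Finset.sum_add_distrib, ← Finset.sum_sub_distrib]
        apply Finset.sum_congr rfl; intro b _
        ring
    _ ≤ ∑ a, ∑ b, Complex.normSq (g a b)
          * ((s a - r b)^2 / (s a + t * r b)) := by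
        apply Finset.sum_le_sum; intro a _
        apply Finset.sum_le_sum; intro b _
        have h := cs_entry (s a + t*r b) (s a - r b) (hα a b) (K a b) (g a b)
        calc 2*(s a - r b)*((starRingEnd ℂ) (K a b) * g a b).re
              - (s a + t*r b)*Complex.normSq (K a b)
            ≤ (s a - r b)^2 * Complex.normSq (g a b) / (s a + t*r b) := h
          _ = Complex.normSq (g a b) * ((s a - r b)^2 / (s a + t * r b)) := by ring

lemma trace_mul_spec {n : ℕ} (A B U : Matrix (Fin n) (Fin n) ℂ) (d e : Fin n → ℂ)
    (hU : star U * U = 1) (hA : A = U * Matrix.diagonal d * star U)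
    (hB : B = U * Matrix.diagonal e * star U) :
    (A * B).trace = ∑ a, d a * e a := by
  subst hA hB
  have hprod : U * Matrix.diagonal d * star U * (U * Matrix.diagonal e * star U)
      = U * (Matrix.diagonal d * Matrix.diagonal e) * star U := by
    calc U * Matrix.diagonal d * star U * (U * Matrix.diagonal e * star U)
        = U * Matrix.diagonal d * ((star U * U) * (Matrix.diagonal e * star U)) := by
          simp only [Matrix.mul_assoc]
      _ = U * (Matrix.diagonal d * Matrix.diagonal e) * star U := by
          rw [hU, Matrix.one_mul]
          simp only [Matrix.mul_assoc]
  rw [hprod, Matrix.trace_mul_cycle, hU, Matrix.one_mul, Matrix.diagonal_mul_diagonal,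
    Matrix.trace_diagonal]

lemma trace_mul_spec2 {n : ℕ} (A B U V : Matrix (Fin n) (Fin n) ℂ) (d e : Fin n → ℂ)
    (hA : A = U * Matrix.diagonal d * star U) (hB : B = V * Matrix.diagonal e * star V) :
    (A * B).trace = ∑ a, ∑ b, d a * e b * ((star U * V) a b) * ((star V * U) b a) := by
  subst hA hB
  have h := trace_sandwich U V 1 1 d e
  have hL : (U * Matrix.diagonal d * star U) * 1 * (V * Matrix.diagonal e * star V) * 1
      = U * Matrix.diagonal d * star U * (V * Matrix.diagonal e * star V) := by
    simp only [Matrix.mul_one]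
  rw [hL] at h
  rw [h]
  apply Finset.sum_congr rfl; intro a _
  apply Finset.sum_congr rfl; intro b _
  rw [Matrix.mul_one, Matrix.mul_one]

lemma qRelEnt_eq {n : ℕ} (σ ρ : Matrix (Fin n) (Fin n) ℂ) (hσ : σ.PosDef) (hρ : ρ.PosDef) :
    qRelEnt σ ρ
      = (∑ a, hσ.1.eigenvalues a * Real.log (hσ.1.eigenvalues a))
        - ∑ a, ∑ b, Complex.normSq
            ((star (hσ.1.eigenvectorUnitary : Matrix (Fin n) (Fin n) ℂ)
              * (hρ.1.eigenvectorUnitary : Matrix (Fin n) (Fin n) ℂ)) a b)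
          * (hσ.1.eigenvalues a * Real.log (hρ.1.eigenvalues b)) := by
  classical
  set s : Fin n → ℝ := hσ.1.eigenvalues with hs_def
  set r : Fin n → ℝ := hρ.1.eigenvalues with hr_def
  set U : Matrix (Fin n) (Fin n) ℂ := (hσ.1.eigenvectorUnitary : Matrix (Fin n) (Fin n) ℂ)
    with hU_def
  set V : Matrix (Fin n) (Fin n) ℂ := (hρ.1.eigenvectorUnitary : Matrix (Fin n) (Fin n) ℂ)
    with hV_def
  set g : Matrix (Fin n) (Fin n) ℂ := star U * V with hg_def
  have hUu' : star U * U = 1 := Matrix.mem_unitaryGroup_iff'.mp hσ.1.eigenvectorUnitary.2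
  have hVu : V * star V = 1 := Matrix.mem_unitaryGroup_iff.mp hρ.1.eigenvectorUnitary.2
  have hσspec : σ = U * Matrix.diagonal (fun a => (s a : ℂ)) * star U :=
    hσ.1.spectral_theorem
  have hLσ : matLog σ = U * Matrix.diagonal (fun a => (Real.log (s a) : ℂ)) * star U := by
    simp only [matLog]
    rw [dif_pos hσ.1]
  have hLρ : matLog ρ = V * Matrix.diagonal (fun b => (Real.log (r b) : ℂ)) * star V := by
    simp only [matLog]
    rw [dif_pos hρ.1]
  have hgherm : star V * U = gᴴ := by
    rw [hg_def]
    simp only [Matrix.conjTranspose_mul, Matrix.star_eq_conjTranspose,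
      Matrix.conjTranspose_conjTranspose]
  have h1 : (σ * matLog σ).trace = ∑ a, (s a : ℂ) * (Real.log (s a) : ℂ) :=
    trace_mul_spec σ (matLog σ) U (fun a => (s a : ℂ)) (fun a => (Real.log (s a) : ℂ))
      hUu' hσspec hLσ
  have h2 : (σ * matLog ρ).trace
      = ∑ a, ∑ b, (s a : ℂ) * (Real.log (r b) : ℂ) * (Complex.normSq (g a b) : ℂ) := by
    have h := trace_mul_spec2 σ (matLog ρ) U V (fun a => (s a : ℂ))
      (fun b => (Real.log (r b) : ℂ)) hσspec hLρ
    rw [h]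
    apply Finset.sum_congr rfl; intro a _
    apply Finset.sum_congr rfl; intro b _
    simp only [hgherm, Matrix.conjTranspose_apply, Complex.star_def]
    rw [mul_assoc, Complex.mul_conj]
  rw [qRelEnt, Matrix.mul_sub, Matrix.trace_sub, Complex.sub_re, h1, h2]
  congr 1
  · rw [Complex.re_sum]
    apply Finset.sum_congr rfl; intro a _
    rw [← Complex.ofReal_mul, Complex.ofReal_re]
  · rw [Complex.re_sum]
    apply Finset.sum_congr rfl; intro a _
    rw [Complex.re_sum]
    apply Finset.sum_congr rfl; intro b _
    rw [← Complex.ofReal_mul, ← Complex.ofReal_mul, Complex.ofReal_re]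
    ring

lemma g_row_sum {n : ℕ} (U V : Matrix (Fin n) (Fin n) ℂ)
    (hU : star U * U = 1) (hV : V * star V = 1) (a : Fin n) :
    ∑ b, Complex.normSq ((star U * V) a b) = 1 := by
  have hgg : (star U * V) * star (star U * V) = 1 := by
    rw [Matrix.star_mul, star_star, Matrix.mul_assoc, ← Matrix.mul_assoc V, hV,
      Matrix.one_mul, hU]
  have h := congrFun (congrFun hgg a) a
  have hentry : ((star U * V) * star (star U * V)) a a
      = ∑ b, (Complex.normSq ((star U * V) a b) : ℂ) := by
    rw [Matrix.mul_apply]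
    apply Finset.sum_congr rfl; intro b _
    rw [Matrix.star_apply, Complex.star_def, Complex.mul_conj]
  rw [hentry] at h
  have : ((1 : Matrix (Fin n) (Fin n) ℂ) a a) = 1 := by simp
  rw [this] at h
  have := congrArg Complex.re h
  rw [Complex.re_sum] at this
  simpa using this

lemma g_col_sum {n : ℕ} (U V : Matrix (Fin n) (Fin n) ℂ)
    (hU : U * star U = 1) (hV : star V * V = 1) (b : Fin n) :
    ∑ a, Complex.normSq ((star U * V) a b) = 1 := by
  have hgg : star (star U * V) * (star U * V) = 1 := by
    rw [Matrix.star_mul, star_star, Matrix.mul_assoc, ← Matrix.mul_assoc U, hU,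
      Matrix.one_mul, hV]
  have h := congrFun (congrFun hgg b) b
  have hentry : (star (star U * V) * (star U * V)) b b
      = ∑ a, (Complex.normSq ((star U * V) a b) : ℂ) := by
    rw [Matrix.mul_apply]
    apply Finset.sum_congr rfl; intro a _
    rw [Matrix.star_apply, Complex.star_def, mul_comm, Complex.mul_conj]
  rw [hentry] at h
  have : ((1 : Matrix (Fin n) (Fin n) ℂ) b b) = 1 := by simp
  rw [this] at h
  have := congrArg Complex.re h
  rw [Complex.re_sum] at this
  simpa using this

lemma eig_sum_trace {n : ℕ} (σ : Matrix (Fin n) (Fin n) ℂ) (hσ : σ.IsHermitian) :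
    ∑ a, hσ.eigenvalues a = σ.trace.re := by
  have hUu' : star (hσ.eigenvectorUnitary : Matrix (Fin n) (Fin n) ℂ)
      * (hσ.eigenvectorUnitary : Matrix (Fin n) (Fin n) ℂ) = 1 :=
    Matrix.mem_unitaryGroup_iff'.mp hσ.eigenvectorUnitary.2
  have h : σ.trace = ∑ a, ((hσ.eigenvalues a : ℝ) : ℂ) := by
    have h0 : σ = (hσ.eigenvectorUnitary : Matrix (Fin n) (Fin n) ℂ)
        * Matrix.diagonal (fun a => ((hσ.eigenvalues a : ℝ) : ℂ))
        * star (hσ.eigenvectorUnitary : Matrix (Fin n) (Fin n) ℂ) := hσ.spectral_theorem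
    have h1 : σ.trace = ((hσ.eigenvectorUnitary : Matrix (Fin n) (Fin n) ℂ)
        * Matrix.diagonal (fun a => ((hσ.eigenvalues a : ℝ) : ℂ))
        * star (hσ.eigenvectorUnitary : Matrix (Fin n) (Fin n) ℂ)).trace := by
      conv_lhs => rw [h0]
    rw [h1, Matrix.trace_mul_cycle, hUu', Matrix.one_mul, Matrix.trace_diagonal]
  rw [h, Complex.re_sum]
  simp

set_option maxHeartbeats 1000000 in
theorem stmt_6 {n : ℕ} {I : Type*} [Fintype I]
    (ρ σ : Matrix (Fin n) (Fin n) ℂ)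
    (hρ : ρ.PosDef) (hσ : σ.PosDef) (hρ1 : ρ.trace = 1) (hσ1 : σ.trace = 1)
    (M : I → Matrix (Fin n) (Fin n) ℂ)
    (hM : ∀ i, (M i).PosSemidef) (hMsum : ∑ i, M i = 1) :
    ∑ i, ((M i * σ).trace).re *
        Real.log (((M i * σ).trace).re / ((M i * ρ).trace).re)
      ≤ qRelEnt σ ρ := by
  classical
  set q : I → ℝ := fun i => ((M i * σ).trace).re with hq_def
  set p : I → ℝ := fun i => ((M i * ρ).trace).re with hp_def
  set s : Fin n → ℝ := hσ.1.eigenvalues with hs_def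
  set r : Fin n → ℝ := hρ.1.eigenvalues with hr_def
  set U : Matrix (Fin n) (Fin n) ℂ := (hσ.1.eigenvectorUnitary : Matrix (Fin n) (Fin n) ℂ)
    with hU_def
  set V : Matrix (Fin n) (Fin n) ℂ := (hρ.1.eigenvectorUnitary : Matrix (Fin n) (Fin n) ℂ)
    with hV_def
  set w : Fin n → Fin n → ℝ := fun a b => Complex.normSq ((star U * V) a b) with hw_def
  have hs_pos : ∀ a, 0 < s a := fun a => hσ.eigenvalues_pos a
  have hr_pos : ∀ b, 0 < r b := fun b => hρ.eigenvalues_pos b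
  have hUu : U * star U = 1 := Matrix.mem_unitaryGroup_iff.mp hσ.1.eigenvectorUnitary.2
  have hUu' : star U * U = 1 := Matrix.mem_unitaryGroup_iff'.mp hσ.1.eigenvectorUnitary.2
  have hVu : V * star V = 1 := Matrix.mem_unitaryGroup_iff.mp hρ.1.eigenvectorUnitary.2
  have hVu' : star V * V = 1 := Matrix.mem_unitaryGroup_iff'.mp hρ.1.eigenvectorUnitary.2
  -- case facts
  have htrace_psd : ∀ (τ : Matrix (Fin n) (Fin n) ℂ), τ.PosDef → ∀ i,
      0 ≤ ((M i * τ).trace).re ∧ (((M i * τ).trace).re = 0 → M i = 0) := by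
    intro τ hτ i
    set B : Matrix (Fin n) (Fin n) ℂ := (open scoped MatrixOrder Matrix.Norms.L2Operator in CFC.sqrt (M i)) with hB_def
    have hBB : B * B = M i := by
      open scoped MatrixOrder Matrix.Norms.L2Operator in exact CFC.sqrt_mul_sqrt_self _ (Matrix.nonneg_iff_posSemidef.mpr (hM i))
    have hBH : B.IsHermitian := by
      open scoped MatrixOrder Matrix.Norms.L2Operator in exact (Matrix.nonneg_iff_posSemidef.mp (CFC.sqrt_nonneg _)).1
    have htr : (M i * τ).trace = (B * τ * B).trace := by
      rw [← hBB, Matrix.mul_assoc, Matrix.trace_mul_comm]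
    rw [htr]
    refine ⟨(trace_BtB τ B hBH hτ).1, fun h => ?_⟩
    have hB0 := (trace_BtB τ B hBH hτ).2 h
    rw [← hBB, hB0, Matrix.mul_zero]
  have hcase : ∀ i, (0 < q i ∧ 0 < p i) ∨ (q i = 0 ∧ p i = 0) := by
    intro i
    by_cases hMi : M i = 0
    · right
      constructor <;> simp [hq_def, hp_def, hMi]
    · left
      constructor
      · rcases lt_or_eq_of_le (htrace_psd σ hσ i).1 with h | h
        · exact h
        · exact absurd ((htrace_psd σ hσ i).2 h.symm) hMi
      · rcases lt_or_eq_of_le (htrace_psd ρ hρ i).1 with h | h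
        · exact h
        · exact absurd ((htrace_psd ρ hρ i).2 h.symm) hMi
  have hqsum : ∑ i, q i = 1 := by
    have h : ∑ i, (M i * σ).trace = ((∑ i, M i) * σ).trace := by
      rw [Matrix.sum_mul, Matrix.trace_sum]
    have h2 : ∑ i, q i = ((∑ i, M i) * σ).trace.re := by
      rw [← h, ← Complex.re_sum]
    rw [h2, hMsum, Matrix.one_mul, hσ1]
    simp
  have hpsum : ∑ i, p i = 1 := by
    have h : ∑ i, (M i * ρ).trace = ((∑ i, M i) * ρ).trace := by
      rw [Matrix.sum_mul, Matrix.trace_sum]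
    have h2 : ∑ i, p i = ((∑ i, M i) * ρ).trace.re := by
      rw [← h, ← Complex.re_sum]
    rw [h2, hMsum, Matrix.one_mul, hρ1]
    simp
  -- integrands
  set φ : I → ℝ → ℝ := fun i t => (q i - p i)^2 * t / ((1+t)^2 * (q i + t * p i)) with hφ_def
  set ψ : Fin n → Fin n → ℝ → ℝ :=
    fun a b t => w a b * ((s a - r b)^2 * t / ((1+t)^2 * (s a + t * r b))) with hψ_def
  have hφint : ∀ i, IntegrableOn (φ i) (Ioi 0) := by
    intro i
    rcases hcase i with ⟨hq, hp⟩ | ⟨hq, hp⟩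
    · exact key_integrable (q i) (p i) hq hp
    · have : φ i = fun _ => (0:ℝ) := by
        funext t
        simp [hφ_def, hq, hp]
      rw [this]
      exact integrableOn_zero
  have hψint : ∀ a b, IntegrableOn (ψ a b) (Ioi 0) :=
    fun a b => (key_integrable (s a) (r b) (hs_pos a) (hr_pos b)).const_mul (w a b)
  -- pointwise comparison
  have hpoint : ∀ t ∈ Ioi (0:ℝ), ∑ i, φ i t ≤ ∑ a, ∑ b, ψ a b t := by
    intro t ht
    rw [mem_Ioi] at ht
    set c : I → ℝ := fun i => (q i - p i) / (q i + t * p i) with hc_def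
    have hu : (0:ℝ) < (1+t)^2 := by positivity
    have hci : ∀ i, (q i - p i)^2 / (q i + t * p i)
        = 2 * c i * (q i - p i) - (c i)^2 * (q i + t * p i) := by
      intro i
      rcases hcase i with ⟨hq, hp⟩ | ⟨hq, hp⟩
      · have hd : q i + t * p i ≠ 0 := by positivity
        rw [hc_def]
        field_simp
        ring
      · simp [hc_def, hq, hp]
    have hφt : ∀ i, φ i t = (t/(1+t)^2) * ((q i - p i)^2 / (q i + t * p i)) := by
      intro i
      have h1t : (1:ℝ)+t ≠ 0 := by positivity
      rcases eq_or_ne (q i + t * p i) 0 with hd | hd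
      · simp only [hφ_def, hd, mul_zero, div_zero]
      · simp only [hφ_def]
        field_simp
    have hψt : ∀ a b, ψ a b t
        = (t/(1+t)^2) * (w a b * ((s a - r b)^2 / (s a + t * r b))) := by
      intro a b
      have h1t : (1:ℝ)+t ≠ 0 := by positivity
      have hd : s a + t * r b ≠ 0 := by
        have := hs_pos a; have := hr_pos b; positivity
      simp only [hψ_def]
      field_simp
    calc ∑ i, φ i t
        = (t/(1+t)^2) * ∑ i, (2 * c i * (q i - p i) - (c i)^2 * (q i + t * p i)) := by
          rw [Finset.mul_sum]
          apply Finset.sum_congr rfl; intro i _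
          rw [hφt i, hci i]
      _ ≤ (t/(1+t)^2) * ∑ a, ∑ b, w a b * ((s a - r b)^2 / (s a + t * r b)) := by
          apply mul_le_mul_of_nonneg_left _ (by positivity)
          exact core_ineq σ ρ hσ hρ M hM hMsum t ht c
      _ = ∑ a, ∑ b, ψ a b t := by
          rw [Finset.mul_sum]
          apply Finset.sum_congr rfl; intro a _
          rw [Finset.mul_sum]
          apply Finset.sum_congr rfl; intro b _
          rw [hψt a b]
  -- per-outcome integral representation
  have hrep : ∀ i, q i * Real.log (q i / p i) = (∫ t in Ioi (0:ℝ), φ i t) + (q i - p i) := by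
    intro i
    rcases hcase i with ⟨hq, hp⟩ | ⟨hq, hp⟩
    · exact classical_rep (q i) (p i) hq hp
    · rw [hq, hp]
      have : (fun t => φ i t) = fun _ => (0:ℝ) := by
        funext t
        simp [hφ_def, hq, hp]
      rw [this]
      simp
  -- assemble
  show ∑ i, q i * Real.log (q i / p i) ≤ qRelEnt σ ρ
  have step1 : ∑ i, q i * Real.log (q i / p i) = ∑ i, ∫ t in Ioi (0:ℝ), φ i t := by
    rw [Finset.sum_congr rfl fun i _ => hrep i, Finset.sum_add_distrib,
      Finset.sum_sub_distrib, hqsum, hpsum]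
    ring
  have step2 : ∑ i, ∫ t in Ioi (0:ℝ), φ i t = ∫ t in Ioi (0:ℝ), ∑ i, φ i t :=
    (integral_finset_sum Finset.univ (fun i _ => hφint i)).symm
  have step3 : ∫ t in Ioi (0:ℝ), ∑ i, φ i t ≤ ∫ t in Ioi (0:ℝ), ∑ a, ∑ b, ψ a b t := by
    apply setIntegral_mono_on
    · exact integrable_finset_sum _ (fun i _ => hφint i)
    · apply integrable_finset_sum
      intro a _
      exact integrable_finset_sum _ (fun b _ => hψint a b)
    · exact measurableSet_Ioi
    · exact hpoint
  have step4 : ∫ t in Ioi (0:ℝ), ∑ a, ∑ b, ψ a b t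
      = ∑ a, ∑ b, w a b * (s a * Real.log (s a) - s a * Real.log (r b) - s a + r b) := by
    rw [integral_finset_sum _ (fun a _ => integrable_finset_sum _ (fun b _ => hψint a b))]
    apply Finset.sum_congr rfl; intro a _
    rw [integral_finset_sum _ (fun b _ => hψint a b)]
    apply Finset.sum_congr rfl; intro b _
    simp only [hψ_def]
    rw [MeasureTheory.integral_const_mul, key_integral (s a) (r b) (hs_pos a) (hr_pos b)]
  have step5 : ∑ a, ∑ b, w a b * (s a * Real.log (s a) - s a * Real.log (r b) - s a + r b)
      = qRelEnt σ ρ := by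
    have e1 : ∑ a, ∑ b, w a b * (s a * Real.log (s a))
        = ∑ a, s a * Real.log (s a) := by
      apply Finset.sum_congr rfl; intro a _
      rw [← Finset.sum_mul, g_row_sum U V hUu' hVu a, one_mul]
    have e2 : ∑ a, ∑ b, w a b * s a = 1 := by
      have : ∀ a, ∑ b, w a b * s a = s a := by
        intro a
        rw [← Finset.sum_mul, g_row_sum U V hUu' hVu a, one_mul]
      rw [Finset.sum_congr rfl fun a _ => this a, eig_sum_trace σ hσ.1, hσ1]
      simp
    have e3 : ∑ a, ∑ b, w a b * r b = 1 := by
      rw [Finset.sum_comm]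
      have : ∀ b, ∑ a, w a b * r b = r b := by
        intro b
        rw [← Finset.sum_mul, g_col_sum U V hUu hVu' b, one_mul]
      rw [Finset.sum_congr rfl fun b _ => this b, eig_sum_trace ρ hρ.1, hρ1]
      simp
    have expand : ∑ a, ∑ b, w a b * (s a * Real.log (s a) - s a * Real.log (r b) - s a + r b)
        = (∑ a, ∑ b, w a b * (s a * Real.log (s a)))
          - (∑ a, ∑ b, w a b * (s a * Real.log (r b)))
          - (∑ a, ∑ b, w a b * s a) + (∑ a, ∑ b, w a b * r b) := by
      rw [← Finset.sum_sub_distrib, ← Finset.sum_sub_distrib, ← Finset.sum_add_distrib]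
      apply Finset.sum_congr rfl; intro a _
      rw [← Finset.sum_sub_distrib, ← Finset.sum_sub_distrib, ← Finset.sum_add_distrib]
      apply Finset.sum_congr rfl; intro b _
      ring
    rw [expand, e1, e2, e3, qRelEnt_eq σ ρ hσ hρ]
    ring
  calc ∑ i, q i * Real.log (q i / p i)
      = ∑ i, ∫ t in Ioi (0:ℝ), φ i t := step1
    _ = ∫ t in Ioi (0:ℝ), ∑ i, φ i t := step2
    _ ≤ ∫ t in Ioi (0:ℝ), ∑ a, ∑ b, ψ a b t := step3
    _ = ∑ a, ∑ b, w a b * (s a * Real.log (s a) - s a * Real.log (r b) - s a + r b) := step4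
    _ = qRelEnt σ ρ := step5
end

section
/- Let X_1, X_2, … be i.i.d. real-valued random variables with finite positive mean μ = E[X_1] > 0, let S_n = X_1 + ⋯ + X_n, and for h > 0 define the first passage time T_h = inf{n ≥ 1 : S_n ≥ h}. Then T_h is almost surely finite and E[T_h]/h → 1/μ as h → ∞. -/
open MeasureTheory Filter ProbabilityTheory
open scoped ENNReal NNReal

namespace RenewalAux

variable {Ω : Type*} [MeasurableSpace Ω] {μ : Measure Ω}

def E (Y : ℕ → Ω → ℝ) (h : ℝ) (k : ℕ) : Set Ω :=
  {ω | ∀ j, 1 ≤ j → j ≤ k → (∑ i ∈ Finset.range j, Y i ω) < h}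

omit [MeasurableSpace Ω] in
lemma E_antitone {Y : ℕ → Ω → ℝ} {h : ℝ} {j k : ℕ} (hjk : j ≤ k) : E Y h k ⊆ E Y h j :=
  fun ω hω i h1 h2 => hω i h1 (h2.trans hjk)

lemma E_meas {Y : ℕ → Ω → ℝ} (hY : ∀ n, Measurable (Y n)) (h : ℝ) (k : ℕ) :
    MeasurableSet (E Y h k) := by
  have : E Y h k = ⋂ (j : ℕ), ⋂ (_ : 1 ≤ j), ⋂ (_ : j ≤ k),
      {ω | (∑ i ∈ Finset.range j, Y i ω) < h} := by
    ext ω; simp [E]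
  rw [this]
  refine MeasurableSet.iInter fun j => MeasurableSet.iInter fun _ => MeasurableSet.iInter fun _ => ?_
  exact measurableSet_lt (Finset.measurable_sum _ fun i _ => hY i) measurable_const



lemma hit_measurable {W : ℕ → Ω → ℝ} (hW : ∀ n, Measurable (W n)) (h : ℝ) :
    Measurable fun ω => sInf {n | 1 ≤ n ∧ h ≤ W n ω} := by
  apply measurable_to_countable'
  intro n
  have hset : ∀ k, MeasurableSet {ω | 1 ≤ k ∧ h ≤ W k ω} := fun k =>
    (MeasurableSet.const _).inter (measurableSet_le measurable_const (hW k))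
  match n with
  | 0 =>
    have : (fun ω => sInf {n | 1 ≤ n ∧ h ≤ W n ω}) ⁻¹' {0}
        = ⋂ k, {ω | 1 ≤ k ∧ h ≤ W k ω}ᶜ := by
      ext ω
      simp only [Set.mem_preimage, Set.mem_singleton_iff, Set.mem_iInter, Set.mem_compl_iff,
        Set.mem_setOf_eq, Nat.sInf_eq_zero]
      constructor
      · rintro (h0 | hemp)
        · exact absurd h0.1 (by omega)
        · intro k hk; exact absurd hk (by rw [Set.eq_empty_iff_forall_notMem] at hemp; exact hemp k)
      · intro hk
        right
        rw [Set.eq_empty_iff_forall_notMem]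
        exact fun k hk' => hk k hk'
    rw [this]
    exact MeasurableSet.iInter fun k => (hset k).compl
  | (n+1) =>
    have : (fun ω => sInf {n | 1 ≤ n ∧ h ≤ W n ω}) ⁻¹' {n+1}
        = {ω | 1 ≤ n+1 ∧ h ≤ W (n+1) ω} ∩ ⋂ (j : ℕ), ⋂ (_ : j ≤ n), {ω | 1 ≤ j ∧ h ≤ W j ω}ᶜ := by
      ext ω
      simp only [Set.mem_preimage, Set.mem_singleton_iff, Set.mem_inter_iff, Set.mem_iInter,
        Set.mem_compl_iff, Set.mem_setOf_eq]
      constructor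
      · intro hinf
        have hne : {k | 1 ≤ k ∧ h ≤ W k ω}.Nonempty := by
          by_contra hc
          rw [Set.not_nonempty_iff_eq_empty] at hc
          rw [hc] at hinf
          simp at hinf
        have hmem := Nat.sInf_mem hne
        rw [hinf] at hmem
        refine ⟨hmem, fun j hj hjmem => ?_⟩
        have := Nat.sInf_le (s := {k | 1 ≤ k ∧ h ≤ W k ω}) hjmem
        omega
      · rintro ⟨hmem, hlt⟩
        have h1 : sInf {k | 1 ≤ k ∧ h ≤ W k ω} ≤ n + 1 := Nat.sInf_le hmem
        have h2 : ¬ sInf {k | 1 ≤ k ∧ h ≤ W k ω} ≤ n := by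
          intro hle
          have hne : {k | 1 ≤ k ∧ h ≤ W k ω}.Nonempty := ⟨n+1, hmem⟩
          have := Nat.sInf_mem hne
          exact hlt _ hle this
        omega
    rw [this]
    exact (hset _).inter (MeasurableSet.iInter fun j => MeasurableSet.iInter fun _ => (hset j).compl)

lemma nat_integrable_of_lintegral_le {f : Ω → ℕ} (hfm : Measurable f) {C : ℝ} (hC : 0 ≤ C)
    (hb : ∫⁻ ω, (f ω : ℝ≥0∞) ∂μ ≤ ENNReal.ofReal C) :
    Integrable (fun ω => (f ω : ℝ)) μ ∧ ∫ ω, (f ω : ℝ) ∂μ ≤ C := by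
  have hmeas : Measurable fun ω => (f ω : ℝ) := (measurable_from_top).comp hfm
  have hnn : 0 ≤ᵐ[μ] fun ω => (f ω : ℝ) := Eventually.of_forall fun ω => Nat.cast_nonneg _
  have hcast : ∀ ω, ENNReal.ofReal ((f ω : ℝ)) = (f ω : ℝ≥0∞) := fun ω => ENNReal.ofReal_natCast _
  have hint : Integrable (fun ω => (f ω : ℝ)) μ := by
    refine ⟨hmeas.aestronglyMeasurable, ?_⟩
    rw [hasFiniteIntegral_iff_norm]
    calc ∫⁻ ω, ENNReal.ofReal ‖(f ω : ℝ)‖ ∂μ = ∫⁻ ω, (f ω : ℝ≥0∞) ∂μ := by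
          refine lintegral_congr fun ω => ?_
          rw [Real.norm_of_nonneg (Nat.cast_nonneg _), hcast]
      _ ≤ ENNReal.ofReal C := hb
      _ < ⊤ := ENNReal.ofReal_lt_top
  refine ⟨hint, ?_⟩
  rw [integral_eq_lintegral_of_nonneg_ae hnn hmeas.aestronglyMeasurable]
  have : ∫⁻ ω, ENNReal.ofReal ((f ω : ℝ)) ∂μ ≤ ENNReal.ofReal C := by
    simpa only [hcast] using hb
  calc (∫⁻ ω, ENNReal.ofReal ((f ω : ℝ)) ∂μ).toReal ≤ (ENNReal.ofReal C).toReal :=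
        ENNReal.toReal_mono ENNReal.ofReal_ne_top this
    _ = C := ENNReal.toReal_ofReal hC


omit [MeasurableSpace Ω] in
/-- Pointwise: the stopped walk is at most `h + c`. -/
lemma stopped_sum_le {Y : ℕ → Ω → ℝ} {h c : ℝ} (ω : Ω) (hc : ∀ k, Y k ω ≤ c)
    (hh : 0 ≤ h) (hc0 : 0 ≤ c) (N : ℕ) :
    (ω ∈ E Y h N →
      (∑ k ∈ Finset.range N, Set.indicator (E Y h k) (fun _ => (1:ℝ)) ω * Y k ω
        = ∑ k ∈ Finset.range N, Y k ω) ∧ ∑ k ∈ Finset.range N, Y k ω ≤ h) ∧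
    ∑ k ∈ Finset.range N, Set.indicator (E Y h k) (fun _ => (1:ℝ)) ω * Y k ω ≤ h + c := by
  induction N with
  | zero =>
    constructor
    · intro _; constructor <;> simp [hh]
    · simp; linarith
  | succ N ih =>
    have hsum : ∀ (f : ℕ → ℝ), ∑ k ∈ Finset.range (N+1), f k
        = (∑ k ∈ Finset.range N, f k) + f N := fun f => Finset.sum_range_succ f N
    constructor
    · intro hmem
      have hmemN : ω ∈ E Y h N := E_antitone (Nat.le_succ N) hmem
      obtain ⟨heq, hle⟩ := ih.1 hmemN
      constructor
      · rw [hsum, hsum, heq, Set.indicator_of_mem hmemN]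
        ring
      · have := hmem (N+1) (by omega) le_rfl
        linarith [this]
    · by_cases hmemN : ω ∈ E Y h N
      · obtain ⟨heq, hle⟩ := ih.1 hmemN
        rw [hsum, heq, Set.indicator_of_mem hmemN]
        have := hc N
        linarith
      · rw [hsum, Set.indicator_of_notMem hmemN]
        have := ih.2
        linarith

/-- The key independence fact: the indicator of `E Y h k` is independent of `Y k`. -/
lemma indep_indicator (μ : Measure Ω) [IsProbabilityMeasure μ] (Y : ℕ → Ω → ℝ)
    (hYm : ∀ n, Measurable (Y n))
    (hindep : iIndepFun Y μ) (h : ℝ) (k : ℕ) :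
    IndepFun (Set.indicator (E Y h k) (fun _ => (1:ℝ))) (Y k) μ := by
  classical
  set Sk : Finset ℕ := Finset.range k with hSk
  -- the set of "bad" tuples
  set B : ({x // x ∈ Sk} → ℝ) → Prop := fun v => ∀ j, 1 ≤ j → j ≤ k →
    (∑ i : {x // x ∈ Sk}, (if (i : ℕ) < j then v i else 0)) < h with hB
  have hBmeas : MeasurableSet {v : {x // x ∈ Sk} → ℝ | B v} := by
    have : {v : {x // x ∈ Sk} → ℝ | B v} = ⋂ (j : ℕ), ⋂ (_ : 1 ≤ j), ⋂ (_ : j ≤ k),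
        {v | (∑ i : {x // x ∈ Sk}, (if (i : ℕ) < j then v i else 0)) < h} := by
      ext v; simp [hB]
    rw [this]
    refine MeasurableSet.iInter fun j => MeasurableSet.iInter fun _ => MeasurableSet.iInter fun _ => ?_
    refine measurableSet_lt (Finset.measurable_sum _ fun i _ => ?_) measurable_const
    by_cases hij : (i : ℕ) < j
    · simpa [hij] using measurable_pi_apply i
    · simpa [hij] using measurable_const
  -- partial sums as functions of the tuple
  have hsum_eq : ∀ (ω : Ω) (j : ℕ), j ≤ k →
      (∑ i : {x // x ∈ Sk}, (if (i : ℕ) < j then Y i ω else 0)) = ∑ i ∈ Finset.range j, Y i ω := by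
    intro ω j hj
    rw [Finset.sum_coe_sort Sk (fun i => if i < j then Y i ω else 0)]
    have hfil : Finset.filter (fun i => i < j) (Finset.range k) = Finset.range j := by
      ext i; simp only [Finset.mem_filter, Finset.mem_range]; omega
    rw [Finset.sum_ite, Finset.sum_const, smul_zero, add_zero, hfil]
  -- E as a preimage
  have hEpre : E Y h k = (fun ω (i : {x // x ∈ Sk}) => Y i ω) ⁻¹' {v | B v} := by
    ext ω
    simp only [E, Set.mem_setOf_eq, Set.mem_preimage, hB]
    constructor
    · intro hω j hj1 hjk; rw [hsum_eq ω j hjk]; exact hω j hj1 hjk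
    · intro hω j hj1 hjk; rw [← hsum_eq ω j hjk]; exact hω j hj1 hjk
  have base : IndepFun (fun ω (i : {x // x ∈ Sk}) => Y i ω)
      (fun ω (i : {x // x ∈ ({k} : Finset ℕ)}) => Y i ω) μ := by
    refine hindep.indepFun_finset Sk {k} ?_ hYm
    simp [hSk, Finset.disjoint_singleton_right]
  have comp := base.comp (_mγ := Real.measurableSpace) (_mγ' := Real.measurableSpace)
    (φ := fun v => Set.indicator {v | B v} (fun _ => (1:ℝ)) v)
    (ψ := fun v => v ⟨k, by simp⟩)
    (measurable_const.indicator hBmeas) (measurable_pi_apply _)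
  convert comp using 1
  funext ω
  by_cases hω : ω ∈ E Y h k
  · rw [Set.indicator_of_mem hω]
    have : (fun (i : {x // x ∈ Sk}) => Y i ω) ∈ {v | B v} := by rw [hEpre] at hω; exact hω
    simp [Function.comp, Set.indicator_of_mem this]
  · rw [Set.indicator_of_notMem hω]
    have : (fun (i : {x // x ∈ Sk}) => Y i ω) ∉ {v | B v} := by rw [hEpre] at hω; exact hω
    simp [Function.comp, Set.indicator_of_notMem this]
  rfl

/-- Wald-type bound for the truncated expected stopping time. -/
lemma wald_bound (μ : Measure Ω) [IsProbabilityMeasure μ] (Y : ℕ → Ω → ℝ)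
    (hYm : ∀ n, Measurable (Y n))
    (hindep : iIndepFun Y μ)
    (hintg : ∀ k, Integrable (Y k) μ) (mY : ℝ) (hmY : ∀ k, ∫ ω, Y k ω ∂μ = mY)
    (c h : ℝ) (hc : ∀ k ω, Y k ω ≤ c) (hh : 0 ≤ h) (hc0 : 0 ≤ c)
    (hEmeas : ∀ k, MeasurableSet (E Y h k)) (N : ℕ) :
    mY * (∑ k ∈ Finset.range N, (μ (E Y h k)).toReal) ≤ h + c := by
  have hprod_int : ∀ k, Integrable
      (fun ω => Set.indicator (E Y h k) (fun _ => (1:ℝ)) ω * Y k ω) μ := by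
    intro k
    refine Integrable.bdd_mul (c := 1) (hintg k)
      ((measurable_const.indicator (hEmeas k)).aestronglyMeasurable) ?_
    refine Eventually.of_forall fun ω => ?_
    by_cases hω : ω ∈ E Y h k
    · rw [Set.indicator_of_mem hω]; simp
    · rw [Set.indicator_of_notMem hω]; simp
  have hterm : ∀ k, ∫ ω, Set.indicator (E Y h k) (fun _ => (1:ℝ)) ω * Y k ω ∂μ
      = (μ (E Y h k)).toReal * mY := by
    intro k
    have hmul := (indep_indicator μ Y hYm hindep h k).integral_mul_eq_mul_integral
      ((integrable_const (1:ℝ)).indicator (hEmeas k)).aestronglyMeasurable (hintg k).aestronglyMeasurable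
    have hrfl : (fun ω => Set.indicator (E Y h k) (fun _ => (1:ℝ)) ω * Y k ω)
        = (Set.indicator (E Y h k) (fun _ => (1:ℝ))) * Y k := rfl
    show ∫ ω, (fun ω => Set.indicator (E Y h k) (fun _ => (1:ℝ)) ω * Y k ω) ω ∂μ
        = (μ (E Y h k)).toReal * mY
    rw [hrfl, hmul, hmY k]
    congr 1
    rw [integral_indicator_const (1:ℝ) (hEmeas k)]
    simp [mul_comm, measureReal_def]
  have hsum : ∫ ω, (∑ k ∈ Finset.range N, Set.indicator (E Y h k) (fun _ => (1:ℝ)) ω * Y k ω) ∂μ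
      = ∑ k ∈ Finset.range N, (μ (E Y h k)).toReal * mY := by
    rw [integral_finset_sum _ (fun k _ => hprod_int k)]
    exact Finset.sum_congr rfl fun k _ => hterm k
  have hle : ∫ ω, (∑ k ∈ Finset.range N, Set.indicator (E Y h k) (fun _ => (1:ℝ)) ω * Y k ω) ∂μ
      ≤ h + c := by
    have hint : Integrable
        (fun ω => ∑ k ∈ Finset.range N, Set.indicator (E Y h k) (fun _ => (1:ℝ)) ω * Y k ω) μ :=
      integrable_finset_sum _ (fun k _ => hprod_int k)
    calc ∫ ω, (∑ k ∈ Finset.range N, Set.indicator (E Y h k) (fun _ => (1:ℝ)) ω * Y k ω) ∂μ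
        ≤ ∫ _, (h + c) ∂μ := by
          refine integral_mono hint (integrable_const _) fun ω => ?_
          exact (stopped_sum_le ω (fun k => hc k ω) hh hc0 N).2
      _ = h + c := by simp
  calc mY * (∑ k ∈ Finset.range N, (μ (E Y h k)).toReal)
      = ∑ k ∈ Finset.range N, (μ (E Y h k)).toReal * mY := by
        rw [Finset.mul_sum]; exact Finset.sum_congr rfl fun k _ => mul_comm _ _
    _ = ∫ ω, (∑ k ∈ Finset.range N, Set.indicator (E Y h k) (fun _ => (1:ℝ)) ω * Y k ω) ∂μ :=
        hsum.symm
    _ ≤ h + c := hle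

lemma wald_tsum (μ : Measure Ω) [IsProbabilityMeasure μ] (Y : ℕ → Ω → ℝ)
    (hYm : ∀ n, Measurable (Y n))
    (hindep : iIndepFun Y μ)
    (hintg : ∀ k, Integrable (Y k) μ) (mY : ℝ) (hmY : ∀ k, ∫ ω, Y k ω ∂μ = mY)
    (c h : ℝ) (hc : ∀ k ω, Y k ω ≤ c) (hh : 0 ≤ h) (hc0 : 0 ≤ c) (hmY0 : 0 < mY)
    (hEmeas : ∀ k, MeasurableSet (E Y h k)) :
    ∫⁻ ω, (∑' k, Set.indicator (E Y h k) (fun _ => (1:ℝ≥0∞)) ω) ∂μ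
      ≤ ENNReal.ofReal ((h + c)/mY) := by
  rw [lintegral_tsum (fun k => (measurable_const.indicator (hEmeas k)).aemeasurable)]
  have hind : ∀ k, ∫⁻ ω, Set.indicator (E Y h k) (fun _ => (1:ℝ≥0∞)) ω ∂μ = μ (E Y h k) := by
    intro k
    exact lintegral_indicator_one (μ := μ) (hEmeas k)
  rw [tsum_congr hind, ENNReal.tsum_eq_iSup_nat]
  refine iSup_le fun N => ?_
  have heq : ∑ k ∈ Finset.range N, μ (E Y h k)
      = ENNReal.ofReal (∑ k ∈ Finset.range N, (μ (E Y h k)).toReal) := by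
    rw [ENNReal.ofReal_sum_of_nonneg (fun k _ => ENNReal.toReal_nonneg)]
    exact Finset.sum_congr rfl fun k _ => (ENNReal.ofReal_toReal (measure_ne_top μ _)).symm
  rw [heq]
  apply ENNReal.ofReal_le_ofReal
  rw [le_div_iff₀ hmY0]
  calc (∑ k ∈ Finset.range N, (μ (E Y h k)).toReal) * mY
      = mY * (∑ k ∈ Finset.range N, (μ (E Y h k)).toReal) := mul_comm _ _
    _ ≤ h + c := wald_bound μ Y hYm hindep hintg mY hmY c h hc hh hc0 hEmeas N

lemma renewal_upper (μ : Measure Ω) [IsProbabilityMeasure μ] (Y : ℕ → Ω → ℝ)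
    (hYm : ∀ n, Measurable (Y n))
    (hindep : iIndepFun Y μ)
    (hintg : ∀ k, Integrable (Y k) μ) (mY : ℝ) (hmY : ∀ k, ∫ ω, Y k ω ∂μ = mY)
    (c h : ℝ) (hc : ∀ k ω, Y k ω ≤ c) (hh : 0 ≤ h) (hc0 : 0 ≤ c) (hmY0 : 0 < mY) :
    (∀ᵐ ω ∂μ, ∃ n, 1 ≤ n ∧ h ≤ ∑ i ∈ Finset.range n, Y i ω) ∧
    Integrable (fun ω => ((sInf {n | 1 ≤ n ∧ h ≤ ∑ i ∈ Finset.range n, Y i ω} : ℕ) : ℝ)) μ ∧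
    ∫ ω, ((sInf {n | 1 ≤ n ∧ h ≤ ∑ i ∈ Finset.range n, Y i ω} : ℕ) : ℝ) ∂μ ≤ (h + c)/mY := by
  have hEmeas : ∀ k, MeasurableSet (E Y h k) := E_meas hYm h
  set G : Ω → ℝ≥0∞ := fun ω => ∑' k, Set.indicator (E Y h k) (fun _ => (1:ℝ≥0∞)) ω with hG
  have hGmeas : Measurable G :=
    Measurable.ennreal_tsum (fun k => measurable_const.indicator (hEmeas k))
  have hGle : ∫⁻ ω, G ω ∂μ ≤ ENNReal.ofReal ((h + c)/mY) :=
    wald_tsum μ Y hYm hindep hintg mY hmY c h hc hh hc0 hmY0 hEmeas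
  have key : ∀ ω, ((sInf {n | 1 ≤ n ∧ h ≤ ∑ i ∈ Finset.range n, Y i ω} : ℕ) : ℝ≥0∞) ≤ G ω := by
    intro ω
    set t := sInf {n | 1 ≤ n ∧ h ≤ ∑ i ∈ Finset.range n, Y i ω} with ht
    have hEk : ∀ k, k < t → ω ∈ E Y h k := by
      intro k hk j hj1 hjk
      by_contra hge
      push_neg at hge
      have hjmem : j ∈ {n | 1 ≤ n ∧ h ≤ ∑ i ∈ Finset.range n, Y i ω} := ⟨hj1, hge⟩
      have := Nat.sInf_le hjmem
      omega
    have hsum : ∑ k ∈ Finset.range t, Set.indicator (E Y h k) (fun _ => (1:ℝ≥0∞)) ω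
        = (t : ℝ≥0∞) := by
      rw [Finset.sum_congr rfl (fun k hk =>
        Set.indicator_of_mem (hEk k (Finset.mem_range.mp hk)) _)]
      simp
    calc (t : ℝ≥0∞) = _ := hsum.symm
      _ ≤ G ω := ENNReal.sum_le_tsum _
  have hTle : ∫⁻ ω, ((sInf {n | 1 ≤ n ∧ h ≤ ∑ i ∈ Finset.range n, Y i ω} : ℕ) : ℝ≥0∞) ∂μ
      ≤ ENNReal.ofReal ((h + c)/mY) := le_trans (lintegral_mono key) hGle
  have hCnn : 0 ≤ (h + c)/mY := div_nonneg (by linarith) hmY0.le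
  have hSm : ∀ n, Measurable (fun ω => ∑ i ∈ Finset.range n, Y i ω) :=
    fun n => Finset.measurable_sum _ fun i _ => hYm i
  obtain ⟨hint, hbnd⟩ := nat_integrable_of_lintegral_le (μ := μ) (hit_measurable hSm h) hCnn hTle
  refine ⟨?_, hint, hbnd⟩
  have hfin : ∀ᵐ ω ∂μ, G ω < ⊤ := ae_lt_top hGmeas (lt_of_le_of_lt hGle ENNReal.ofReal_lt_top).ne
  filter_upwards [hfin] with ω hω
  by_contra hne
  push_neg at hne
  have hall : ∀ k, ω ∈ E Y h k := fun k j hj1 _ => hne j hj1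
  have hallind : ∀ k, Set.indicator (E Y h k) (fun _ => (1:ℝ≥0∞)) ω = 1 :=
    fun k => Set.indicator_of_mem (hall k) _
  obtain ⟨n, hn⟩ := ENNReal.exists_nat_gt hω.ne
  have hle : (n : ℝ≥0∞) ≤ G ω := by
    calc (n:ℝ≥0∞) = ∑ k ∈ Finset.range n, Set.indicator (E Y h k) (fun _ => (1:ℝ≥0∞)) ω := by
          simp [hallind]
      _ ≤ G ω := ENNReal.sum_le_tsum _
  exact hn.not_ge hle
end RenewalAux
open RenewalAux in
theorem stmt_9 {Ω : Type*} [MeasurableSpace Ω] (μ : Measure Ω) [IsProbabilityMeasure μ]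
    (X : ℕ → Ω → ℝ)
    (hmeas : ∀ n, Measurable (X n))
    (hindep : ProbabilityTheory.iIndepFun X μ)
    (hident : ∀ n, Measure.map (X n) μ = Measure.map (X 0) μ)
    (hint : Integrable (X 0) μ)
    (m : ℝ) (hm : m = ∫ ω, X 0 ω ∂μ) (hmpos : 0 < m)
    (S : ℕ → Ω → ℝ) (hS : ∀ n ω, S n ω = ∑ k ∈ Finset.range n, X k ω)
    (T : ℝ → Ω → ℕ) (hT : ∀ h ω, T h ω = sInf {n | 1 ≤ n ∧ h ≤ S n ω}) :
    (∀ h : ℝ, ∀ᵐ ω ∂μ, ∃ n, 1 ≤ n ∧ h ≤ S n ω) ∧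
    Tendsto (fun h : ℝ => (∫ ω, (T h ω : ℝ) ∂μ) / h) atTop (nhds (1 / m)) := by
  classical
  -- basic measurability
  have hSmeas : ∀ n, Measurable (S n) := by
    intro n
    have : S n = fun ω => ∑ i ∈ Finset.range n, X i ω := funext (hS n)
    rw [this]; exact Finset.measurable_sum _ fun i _ => hmeas i
  have hTmeas : ∀ h : ℝ, Measurable (T h) := by
    intro h
    have : T h = fun ω => sInf {n | 1 ≤ n ∧ h ≤ S n ω} := funext (hT h)
    rw [this]; exact hit_measurable hSmeas h
  -- integrability of each X k
  have hXint : ∀ k, Integrable (X k) μ := by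
    intro k
    have h0 : Integrable id (Measure.map (X 0) μ) :=
      (integrable_map_measure aestronglyMeasurable_id (hmeas 0).aemeasurable).mpr hint
    have h1 : Integrable id (Measure.map (X k) μ) := by rwa [hident k]
    exact (integrable_map_measure aestronglyMeasurable_id (hmeas k).aemeasurable).mp h1
  -- strong law of large numbers
  have hSLLN : ∀ᵐ ω ∂μ, Tendsto (fun n : ℕ => (∑ i ∈ Finset.range n, X i ω) / n)
      atTop (nhds m) := by
    have := ProbabilityTheory.strong_law_ae_real X hint
      (fun i j hij => hindep.indepFun hij)
      (fun i => ⟨(hmeas i).aemeasurable, (hmeas 0).aemeasurable, hident i⟩)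
    rw [hm]; exact this
  -- part 1 : a.s. crossing for each level
  have part1 : ∀ h : ℝ, ∀ᵐ ω ∂μ, ∃ n, 1 ≤ n ∧ h ≤ S n ω := by
    intro h
    filter_upwards [hSLLN] with ω hω
    have hev : ∀ᶠ n : ℕ in atTop, m/2 < (∑ i ∈ Finset.range n, X i ω)/n :=
      hω.eventually (eventually_gt_nhds (by linarith))
    obtain ⟨N, hN⟩ := eventually_atTop.mp hev
    set n := max (max N 1) (⌈2*|h|/m⌉₊ + 1) with hn
    have hn1 : 1 ≤ n := le_trans (le_max_right N 1) (le_max_left _ _)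
    have hnN : N ≤ n := le_trans (le_max_left N 1) (le_max_left _ _)
    have hnpos : (0:ℝ) < n := by exact_mod_cast lt_of_lt_of_le Nat.zero_lt_one hn1
    have h1 := hN n hnN
    have h2 : m/2 * n ≤ ∑ i ∈ Finset.range n, X i ω := by
      rw [lt_div_iff₀ hnpos] at h1; linarith
    have h3 : 2*|h|/m ≤ (n:ℝ) := by
      calc 2*|h|/m ≤ (⌈2*|h|/m⌉₊ : ℝ) := Nat.le_ceil _
        _ ≤ (⌈2*|h|/m⌉₊ + 1 : ℕ) := by exact_mod_cast Nat.le_succ _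
        _ ≤ (n:ℝ) := by exact_mod_cast le_max_right _ _
    refine ⟨n, hn1, ?_⟩
    rw [hS]
    have h4 : |h| ≤ m/2 * n := by
      rw [div_le_iff₀ hmpos] at h3; linarith
    calc h ≤ |h| := le_abs_self h
      _ ≤ m/2 * n := h4
      _ ≤ _ := h2
  -- truncated variables
  set Yc : ℝ → ℕ → Ω → ℝ := fun c k ω => min (X k ω) c with hYc
  have hYm : ∀ (c : ℝ) k, Measurable (Yc c k) := fun c k => (hmeas k).min measurable_const
  have hYindep : ∀ c : ℝ, ProbabilityTheory.iIndepFun (Yc c) μ :=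
    fun c => hindep.comp (fun _ x => min x c) (fun _ => measurable_id.min measurable_const)
  have hYint : ∀ (c : ℝ) k, Integrable (Yc c k) μ := by
    intro c k
    refine Integrable.mono' ((hXint k).abs.add (integrable_const |c|))
      (hYm c k).aestronglyMeasurable (Eventually.of_forall fun ω => ?_)
    rw [Real.norm_eq_abs]
    show |min (X k ω) c| ≤ |X k ω| + |c|
    rcases min_choice (X k ω) c with hmin | hmin <;> rw [hmin]
    · linarith [abs_nonneg c, le_abs_self (X k ω), neg_abs_le (X k ω)]
    · linarith [abs_nonneg (X k ω), le_abs_self c, neg_abs_le c]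
  set mc : ℝ → ℝ := fun c => ∫ ω, min (X 0 ω) c ∂μ with hmc
  have hmcall : ∀ (c : ℝ) k, ∫ ω, Yc c k ω ∂μ = mc c := by
    intro c k
    show ∫ ω, min (X k ω) c ∂μ = _
    have hmm : Measurable fun x : ℝ => min x c := measurable_id.min measurable_const
    have h1 : ∫ ω, min (X k ω) c ∂μ = ∫ x, min x c ∂(Measure.map (X k) μ) :=
      (integral_map (hmeas k).aemeasurable hmm.aestronglyMeasurable).symm
    rw [h1, hident k, integral_map (hmeas 0).aemeasurable hmm.aestronglyMeasurable]
  have hmctend : Tendsto (fun j : ℕ => mc j) atTop (nhds m) := by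
    rw [hm]
    refine tendsto_integral_of_dominated_convergence (fun ω => |X 0 ω|)
      (fun j => ((hmeas 0).min measurable_const).aestronglyMeasurable) hint.abs ?_ ?_
    · intro j
      refine Eventually.of_forall fun ω => ?_
      rw [Real.norm_eq_abs]
      rcases le_or_gt (X 0 ω) ((j:ℕ):ℝ) with hle | hlt
      · rw [min_eq_left hle]
      · rw [min_eq_right hlt.le, abs_of_nonneg (by positivity)]
        calc ((j:ℕ):ℝ) ≤ X 0 ω := hlt.le
          _ ≤ |X 0 ω| := le_abs_self _
    · refine Eventually.of_forall fun ω => ?_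
      refine tendsto_atTop_of_eventually_const (i₀ := ⌈X 0 ω⌉₊) fun j hj => ?_
      exact min_eq_left ((Nat.le_ceil _).trans (Nat.cast_le.mpr hj))
  -- the key integrability and upper bound
  have hkey : ∀ (j : ℕ), 0 < mc j → ∀ h : ℝ, 0 ≤ h →
      Integrable (fun ω => (T h ω : ℝ)) μ ∧ ∫ ω, (T h ω : ℝ) ∂μ ≤ (h + j)/(mc j) := by
    intro j hj h hh
    obtain ⟨hne, hintY, hbndY⟩ := renewal_upper μ (Yc j) (hYm j) (hYindep j)
      (fun k => hYint j k) (mc j) (fun k => hmcall j k) (j:ℝ) h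
      (fun k ω => min_le_right _ _) hh (Nat.cast_nonneg j) hj
    have hle : ∀ᵐ ω ∂μ, (T h ω : ℝ)
        ≤ ((sInf {n | 1 ≤ n ∧ h ≤ ∑ i ∈ Finset.range n, Yc j i ω} : ℕ) : ℝ) := by
      filter_upwards [hne] with ω hω
      have hYmem := Nat.sInf_mem hω
      obtain ⟨h1, h2⟩ := hYmem
      have hmemX : sInf {n | 1 ≤ n ∧ h ≤ ∑ i ∈ Finset.range n, Yc j i ω}
          ∈ {n | 1 ≤ n ∧ h ≤ S n ω} := by
        refine ⟨h1, h2.trans ?_⟩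
        rw [hS]
        exact Finset.sum_le_sum fun i _ => min_le_left _ _
      have : T h ω ≤ sInf {n | 1 ≤ n ∧ h ≤ ∑ i ∈ Finset.range n, Yc j i ω} := by
        rw [hT]; exact Nat.sInf_le hmemX
      exact_mod_cast this
    have hTm : Measurable (fun ω => (T h ω : ℝ)) := measurable_from_top.comp (hTmeas h)
    have hTint : Integrable (fun ω => (T h ω : ℝ)) μ := by
      refine Integrable.mono' hintY hTm.aestronglyMeasurable ?_
      filter_upwards [hle] with ω hω
      rw [Real.norm_of_nonneg (Nat.cast_nonneg _)]
      exact hω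
    exact ⟨hTint, (integral_mono_ae hTint hintY hle).trans hbndY⟩
  refine ⟨part1, ?_⟩
  -- crossing for all integer levels simultaneously
  have hallcross : ∀ᵐ ω ∂μ, ∀ j : ℕ, ∃ n, 1 ≤ n ∧ (j:ℝ) ≤ S n ω :=
    ae_all_iff.mpr fun j => part1 (j:ℝ)
  rw [Metric.tendsto_nhds]
  intro ε hε
  -- UPPER BOUND
  have hub : ∀ᶠ h : ℝ in atTop, (∫ ω, (T h ω : ℝ) ∂μ)/h < 1/m + ε := by
    have t1 : Tendsto (fun j : ℕ => (mc j)⁻¹) atTop (nhds m⁻¹) := hmctend.inv₀ hmpos.ne'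
    have e1 : ∀ᶠ j : ℕ in atTop, (mc j)⁻¹ < m⁻¹ + ε/2 :=
      t1.eventually (eventually_lt_nhds (by linarith))
    have e2 : ∀ᶠ j : ℕ in atTop, 0 < mc j := hmctend.eventually (eventually_gt_nhds hmpos)
    obtain ⟨j, hj1, hj2⟩ := (e2.and e1).exists
    have hphi : Tendsto (fun h : ℝ => ((h + j)/(mc j))/h) atTop (nhds ((mc j)⁻¹)) := by
      have heq : (fun h : ℝ => ((h + j)/(mc j))/h) =ᶠ[atTop]
          fun h => (1 + (j:ℝ)/h) * (mc j)⁻¹ := by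
        filter_upwards [eventually_gt_atTop (0:ℝ)] with h hh
        field_simp
      rw [tendsto_congr' heq]
      have h2 : Tendsto (fun h : ℝ => 1 + (j:ℝ)/h) atTop (nhds 1) := by
        have := (tendsto_const_nhds (x := (j:ℝ)) (f := atTop)).div_atTop tendsto_id
        simpa using tendsto_const_nhds.add this
      simpa using h2.mul tendsto_const_nhds
    have hev2 : ∀ᶠ h : ℝ in atTop, ((h + j)/(mc j))/h < 1/m + ε := by
      refine hphi.eventually (eventually_lt_nhds ?_)
      rw [one_div]; linarith
    filter_upwards [hev2, eventually_ge_atTop (0:ℝ), eventually_gt_atTop (0:ℝ)]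
      with h h1 h2 h3
    obtain ⟨hTint, hTbnd⟩ := hkey j hj1 h h2
    calc (∫ ω, (T h ω : ℝ) ∂μ)/h ≤ ((h + j)/(mc j))/h := (div_le_div_iff_of_pos_right h3).mpr hTbnd
      _ < 1/m + ε := h1
  -- LOWER BOUND
  have hlb : ∀ᶠ h : ℝ in atTop, 1/m - ε < (∫ ω, (T h ω : ℝ) ∂μ)/h := by
    obtain ⟨j0, hj0⟩ := (hmctend.eventually (eventually_gt_nhds hmpos)).exists
    set a : ℝ := max (1/m - ε/2) (1/(2*m)) with ha
    have ha1 : 1/m - ε < a := lt_of_lt_of_le (by linarith) (le_max_left _ _)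
    have ha2 : a < 1/m := by
      have hhalf : 1/(2*m) = (1/m)/2 := by ring
      have hmi : 0 < 1/m := by positivity
      refine max_lt (by linarith) (by rw [hhalf]; linarith)
    have ha0 : 0 < a := lt_of_lt_of_le (by positivity : (0:ℝ) < 1/(2*m)) (le_max_right _ _)
    by_contra hcon
    rw [not_eventually] at hcon
    have hfreq : ∃ᶠ h : ℝ in atTop, (∫ ω, (T h ω : ℝ) ∂μ)/h ≤ 1/m - ε := by
      refine hcon.mono fun h hh => ?_
      exact not_lt.mp hh
    have hexists : ∀ k : ℕ, ∃ h : ℝ, h ≥ (k:ℝ)+1 ∧ (∫ ω, (T h ω : ℝ) ∂μ)/h ≤ 1/m - ε := by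
      intro k
      obtain ⟨b, hb1, hb2⟩ := frequently_atTop.mp hfreq ((k:ℝ)+1)
      exact ⟨b, hb1, hb2⟩
    choose g hg1 hg2 using hexists
    have hgpos : ∀ k, 0 < g k := fun k => lt_of_lt_of_le (by positivity) (hg1 k)
    have hgtop : Tendsto g atTop atTop := by
      refine tendsto_atTop_mono (fun k => ?_) tendsto_natCast_atTop_atTop
      linarith [hg1 k]
    -- choose ε' with a < (m+ε')⁻¹
    obtain ⟨ε', hε'pos, hε'⟩ : ∃ ε' : ℝ, 0 < ε' ∧ a < (m+ε')⁻¹ := by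
      have h1 : Tendsto (fun n : ℕ => m + 1/((n:ℝ)+1)) atTop (nhds m) := by
        simpa using (tendsto_const_nhds (x := m)).add tendsto_one_div_add_atTop_nhds_zero_nat
      have h2 := (h1.inv₀ hmpos.ne').eventually (eventually_gt_nhds (by rwa [← one_div]))
      obtain ⟨n, hn⟩ := h2.exists
      exact ⟨1/((n:ℝ)+1), by positivity, hn⟩
    have hmε' : 0 < m + ε' := by linarith
    -- a.e. the ratio is eventually at least `a`
    have hae : ∀ᵐ ω ∂μ, ∀ᶠ k in atTop, a ≤ (T (g k) ω : ℝ)/(g k) := by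
      filter_upwards [hSLLN, hallcross] with ω hω hcr
      have hev := hω.eventually (eventually_lt_nhds (show m < m + ε' by linarith))
      obtain ⟨N, hN⟩ := eventually_atTop.mp hev
      set C := ∑ n ∈ Finset.range N, |∑ i ∈ Finset.range n, X i ω| with hC
      have hCnn : 0 ≤ C := Finset.sum_nonneg fun n _ => abs_nonneg _
      have hCb : ∀ n : ℕ, (∑ i ∈ Finset.range n, X i ω) ≤ C + (m + ε') * n := by
        intro n
        rcases lt_or_ge n N with hn | hn
        · have hmem : n ∈ Finset.range N := Finset.mem_range.mpr hn
          have h1 : |∑ i ∈ Finset.range n, X i ω| ≤ C :=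
            Finset.single_le_sum (f := fun r => |∑ i ∈ Finset.range r, X i ω|)
              (fun i _ => abs_nonneg _) hmem
          have h2 : (0:ℝ) ≤ (m + ε') * n := by positivity
          calc (∑ i ∈ Finset.range n, X i ω) ≤ |∑ i ∈ Finset.range n, X i ω| := le_abs_self _
            _ ≤ C := h1
            _ ≤ C + (m + ε') * n := by linarith
        · rcases Nat.eq_zero_or_pos n with rfl | hpos
          · simp [hCnn]
          · have h1 := hN n hn
            have hn0 : (0:ℝ) < n := by exact_mod_cast hpos
            rw [div_lt_iff₀ hn0] at h1
            linarith
      have hcross : ∀ h : ℝ, {n | 1 ≤ n ∧ h ≤ S n ω}.Nonempty := by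
        intro h
        obtain ⟨n, hn1, hn2⟩ := hcr ⌈h⌉₊
        exact ⟨n, hn1, (Nat.le_ceil h).trans hn2⟩
      have hkeyω : ∀ h : ℝ, 0 < h → (h - C)/(m + ε') ≤ (T h ω : ℝ) := by
        intro h hh
        have hmem : T h ω ∈ {n | 1 ≤ n ∧ h ≤ S n ω} := by
          rw [hT]; exact Nat.sInf_mem (hcross h)
        obtain ⟨h1, h2⟩ := hmem
        have h3 : h ≤ C + (m + ε') * (T h ω) := by
          have := hCb (T h ω)
          rw [hS] at h2
          linarith
        rw [div_le_iff₀ hmε']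
        linarith
      have htend : Tendsto (fun k => ((g k - C)/(m+ε'))/(g k)) atTop (nhds ((m+ε')⁻¹)) := by
        have heq : (fun k => ((g k - C)/(m+ε'))/(g k)) =ᶠ[atTop]
            fun k => (1 - C/(g k)) * (m+ε')⁻¹ := by
          filter_upwards [hgtop.eventually (eventually_gt_atTop (0:ℝ))] with k hk
          field_simp
        rw [tendsto_congr' heq]
        have h2 : Tendsto (fun k => 1 - C/(g k)) atTop (nhds 1) := by
          have := (tendsto_const_nhds (x := C) (f := atTop)).div_atTop hgtop
          simpa using tendsto_const_nhds.sub this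
        simpa using h2.mul tendsto_const_nhds
      have hev2 : ∀ᶠ k in atTop, a < ((g k - C)/(m+ε'))/(g k) :=
        htend.eventually (eventually_gt_nhds hε')
      filter_upwards [hev2] with k hk
      calc a ≤ ((g k - C)/(m+ε'))/(g k) := hk.le
        _ ≤ (T (g k) ω : ℝ)/(g k) := (div_le_div_iff_of_pos_right (hgpos k)).mpr (hkeyω (g k) (hgpos k))
    -- Fatou's lemma
    have hfk_meas : ∀ k, Measurable fun ω => ENNReal.ofReal ((T (g k) ω : ℝ)/(g k)) :=
      fun k => ((measurable_from_top.comp (hTmeas (g k))).div_const _).ennreal_ofReal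
    have hfat1 : ENNReal.ofReal a
        ≤ ∫⁻ ω, liminf (fun k => ENNReal.ofReal ((T (g k) ω : ℝ)/(g k))) atTop ∂μ := by
      have hptwise : ∀ᵐ ω ∂μ, ENNReal.ofReal a
          ≤ liminf (fun k => ENNReal.ofReal ((T (g k) ω : ℝ)/(g k))) atTop := by
        filter_upwards [hae] with ω hω
        exact le_liminf_of_le (by isBoundedDefault)
          (hω.mono fun k hk => ENNReal.ofReal_le_ofReal hk)
      calc ENNReal.ofReal a = ∫⁻ _, ENNReal.ofReal a ∂μ := by simp
        _ ≤ _ := lintegral_mono_ae hptwise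
    have hfat2 := lintegral_liminf_le hfk_meas (μ := μ) (u := atTop)
    have hint_k : ∀ k, Integrable (fun ω => (T (g k) ω : ℝ)/(g k)) μ :=
      fun k => ((hkey j0 hj0 (g k) (hgpos k).le).1.div_const _)
    have h3 : ∀ k, ∫⁻ ω, ENNReal.ofReal ((T (g k) ω : ℝ)/(g k)) ∂μ
        = ENNReal.ofReal ((∫ ω, (T (g k) ω : ℝ) ∂μ)/(g k)) := by
      intro k
      rw [← ofReal_integral_eq_lintegral_ofReal (hint_k k)
        (Eventually.of_forall fun ω => div_nonneg (Nat.cast_nonneg _) (hgpos k).le)]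
      rw [integral_div]
    have h4 : liminf (fun k => ∫⁻ ω, ENNReal.ofReal ((T (g k) ω : ℝ)/(g k)) ∂μ) atTop
        ≤ ENNReal.ofReal (1/m - ε) := by
      have hbd : ∀ k, ∫⁻ ω, ENNReal.ofReal ((T (g k) ω : ℝ)/(g k)) ∂μ
          ≤ ENNReal.ofReal (1/m - ε) := by
        intro k
        rw [h3 k]
        exact ENNReal.ofReal_le_ofReal (hg2 k)
      calc liminf (fun k => ∫⁻ ω, ENNReal.ofReal ((T (g k) ω : ℝ)/(g k)) ∂μ) atTop
          ≤ liminf (fun _ : ℕ => ENNReal.ofReal (1/m - ε)) atTop :=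
            liminf_le_liminf (Eventually.of_forall hbd)
        _ = ENNReal.ofReal (1/m - ε) := liminf_const _
    have hchain : ENNReal.ofReal a ≤ ENNReal.ofReal (1/m - ε) :=
      hfat1.trans (hfat2.trans h4)
    have : ENNReal.ofReal (1/m - ε) < ENNReal.ofReal a :=
      (ENNReal.ofReal_lt_ofReal_iff ha0).mpr ha1
    exact absurd hchain (not_le.mpr this)
  filter_upwards [hub, hlb] with h h1 h2
  rw [Real.dist_eq, abs_lt]
  constructor <;> linarith
end
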